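/- The derivative of the soft-thresholding risk at τ = 0 satisfies ∂r(τ; G)/∂τ |_{τ=0} = −4·E_μ[φ(μ)] = −4·E_μ[e^{−μ²/2}/√(2π)], and in particular this derivative is strictly negative. -/

import Mathlib

open MeasureTheory

/-- Standard Gaussian density `φ(z) = e^{-z²/2}/√(2π)`. -/
noncomputable def gaussPDF (z : ℝ) : ℝ := Real.exp (-z ^ 2 / 2) / Real.sqrt (2 * Real.pi)

/-- Soft-thresholding function `η(x; τ) = sign(x)·max(|x| − τ, 0)`. -/
noncomputable def softThr (x τ : ℝ) : ℝ := Real.sign x * max (|x| - τ) 0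

/-- Soft-thresholding risk `r(τ; G) = E_{μ∼G, Z∼N(0,1)}[(η(μ + Z; τ) − μ)²]`. -/
noncomputable def stRisk (G : Measure ℝ) (τ : ℝ) : ℝ :=
  ∫ m, (∫ z, (softThr (m + z) τ - m) ^ 2 * gaussPDF z) ∂G

open Real Set Filter

lemma sqrt_two_pi_ge_one : (1:ℝ) ≤ Real.sqrt (2 * Real.pi) := by
  rw [show (1:ℝ) = Real.sqrt 1 by simp]
  exact Real.sqrt_le_sqrt (by nlinarith [Real.pi_gt_three])

lemma gaussPDF_pos (z : ℝ) : 0 < gaussPDF z :=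
  div_pos (Real.exp_pos _) (Real.sqrt_pos.2 (by positivity))

lemma gaussPDF_neg (z : ℝ) : gaussPDF (-z) = gaussPDF z := by simp [gaussPDF]

lemma continuous_gaussPDF : Continuous gaussPDF := by
  unfold gaussPDF; fun_prop

lemma gaussPDF_le_one (z : ℝ) : gaussPDF z ≤ 1 := by
  unfold gaussPDF
  rw [div_le_one (lt_of_lt_of_le one_pos sqrt_two_pi_ge_one)]
  calc Real.exp (-z^2/2) ≤ 1 := by
        rw [Real.exp_le_one_iff]; nlinarith [sq_nonneg z]
    _ ≤ Real.sqrt (2*Real.pi) := sqrt_two_pi_ge_one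

lemma hasDerivAt_gaussPDF (z : ℝ) : HasDerivAt gaussPDF (-z * gaussPDF z) z := by
  have h : HasDerivAt (fun z : ℝ => -z^2/2) (-z) z := by
    have := (((hasDerivAt_pow 2 z).neg).div_const 2)
    convert this using 1
    · rfl
    · rfl
    · rfl
    · push_cast; ring
  have h2 := (h.exp).div_const (Real.sqrt (2*Real.pi))
  have he : gaussPDF = fun z => Real.exp (-z^2/2) / Real.sqrt (2*Real.pi) := rfl
  rw [he]
  convert h2 using 1
  · rfl
  · rfl
  · simp only []; ring

lemma gaussPDF_eq : gaussPDF = fun z => (Real.sqrt (2*Real.pi))⁻¹ * Real.exp (-(1/2) * z^2) := by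
  funext z; unfold gaussPDF; rw [show -(1/2) * z^2 = -z^2/2 by ring]; ring

lemma integrable_gaussPDF : Integrable gaussPDF := by
  rw [gaussPDF_eq]
  exact (integrable_exp_neg_mul_sq (by norm_num : (0:ℝ) < 1/2)).const_mul _

lemma integrable_mul_gaussPDF : Integrable (fun z => z * gaussPDF z) := by
  rw [gaussPDF_eq]
  have := ((integrable_mul_exp_neg_mul_sq (by norm_num : (0:ℝ) < 1/2))).const_mul
    (Real.sqrt (2*Real.pi))⁻¹
  exact this.congr (Filter.Eventually.of_forall fun z => by ring)

lemma integrable_sq_mul_gaussPDF : Integrable (fun z => z^2 * gaussPDF z) := by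
  rw [gaussPDF_eq]
  have h := (integrable_rpow_mul_exp_neg_mul_sq (by norm_num : (0:ℝ) < 1/2)
    (by norm_num : (-1:ℝ) < 2)).const_mul (Real.sqrt (2*Real.pi))⁻¹
  refine h.congr (Filter.Eventually.of_forall fun z => ?_)
  show (Real.sqrt (2*Real.pi))⁻¹ * (z ^ (2:ℝ) * Real.exp (-(1/2)*z^2)) = _
  rw [show (2:ℝ) = ((2:ℕ):ℝ) by norm_num, Real.rpow_natCast]
  ring

lemma integral_gaussPDF : ∫ z, gaussPDF z = 1 := by
  rw [gaussPDF_eq]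
  rw [integral_const_mul, integral_gaussian]
  rw [show Real.pi / (1/2) = 2 * Real.pi by ring]
  rw [inv_mul_cancel₀ (by positivity)]

lemma tendsto_gaussPDF_atTop : Tendsto gaussPDF atTop (nhds 0) := by
  rw [gaussPDF_eq, show (0:ℝ) = (Real.sqrt (2*Real.pi))⁻¹ * 0 by ring]
  apply Tendsto.const_mul
  apply Real.tendsto_exp_atBot.comp
  exact Tendsto.const_mul_atTop_of_neg (by norm_num) (tendsto_pow_atTop (by norm_num))

lemma tendsto_gaussPDF_atBot : Tendsto gaussPDF atBot (nhds 0) := by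
  have := tendsto_gaussPDF_atTop.comp tendsto_neg_atBot_atTop
  refine this.congr fun z => gaussPDF_neg z

lemma tendsto_mul_gaussPDF_atTop : Tendsto (fun z => z * gaussPDF z) atTop (nhds 0) := by
  rw [gaussPDF_eq]
  have h := rpow_mul_exp_neg_mul_sq_isLittleO_exp_neg (by norm_num : (0:ℝ) < 1/2) 1
  have h0 : Tendsto (fun x : ℝ => Real.exp (-(1/2) * x)) atTop (nhds 0) := by
    apply Real.tendsto_exp_atBot.comp
    exact Tendsto.const_mul_atTop_of_neg (by norm_num) tendsto_id
  have h1 : Tendsto (fun x : ℝ => x ^ (1:ℝ) * Real.exp (-(1/2) * x^2)) atTop (nhds 0) :=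
    h.trans_tendsto h0
  have h2 := h1.const_mul (Real.sqrt (2*Real.pi))⁻¹
  rw [mul_zero] at h2
  apply h2.congr'
  filter_upwards [eventually_ge_atTop (0:ℝ)] with z hz
  rw [Real.rpow_one]; ring

lemma tendsto_mul_gaussPDF_atBot : Tendsto (fun z => z * gaussPDF z) atBot (nhds 0) := by
  have := (tendsto_mul_gaussPDF_atTop.comp tendsto_neg_atBot_atTop).neg
  rw [neg_zero] at this
  refine this.congr fun z => ?_
  simp only [Function.comp_apply, gaussPDF_neg]
  ring

lemma integral_Ioi_mul_gaussPDF (a : ℝ) : ∫ z in Ioi a, z * gaussPDF z = gaussPDF a := by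
  have := integral_Ioi_of_hasDerivAt_of_tendsto' (a := a) (m := 0)
    (f := fun z => -gaussPDF z) (f' := fun z => z * gaussPDF z)
    (fun x _ => (hasDerivAt_gaussPDF x).neg.congr_deriv (by ring))
    integrable_mul_gaussPDF.integrableOn
    (by simpa using tendsto_gaussPDF_atTop.neg)
  simpa using this

lemma integral_Iic_mul_gaussPDF (a : ℝ) : ∫ z in Iic a, z * gaussPDF z = -gaussPDF a := by
  have := integral_Iic_of_hasDerivAt_of_tendsto' (a := a) (m := 0)
    (f := fun z => -gaussPDF z) (f' := fun z => z * gaussPDF z)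
    (fun x _ => (hasDerivAt_gaussPDF x).neg.congr_deriv (by ring))
    integrable_mul_gaussPDF.integrableOn
    (by simpa using tendsto_gaussPDF_atBot.neg)
  simpa using this

lemma measurable_realSign : Measurable Real.sign := by
  have h : Real.sign = fun x : ℝ => if x < 0 then (-1:ℝ) else if 0 < x then 1 else 0 := by
    funext x; rfl
  rw [h]
  exact Measurable.ite (measurableSet_lt measurable_id measurable_const) measurable_const
    (Measurable.ite (measurableSet_lt measurable_const measurable_id) measurable_const
      measurable_const)

lemma abs_realSign_le (x : ℝ) : |Real.sign x| ≤ 1 := by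
  rcases Real.sign_apply_eq x with h | h | h <;> rw [h] <;> norm_num

lemma integrable_sign_mul_gaussPDF (m : ℝ) :
    Integrable (fun z => z * Real.sign (m + z) * gaussPDF z) := by
  have hm : Measurable fun z : ℝ => z * Real.sign (m + z) * gaussPDF z :=
    ((measurable_id.mul (measurable_realSign.comp (measurable_const.add measurable_id)))).mul
      continuous_gaussPDF.measurable
  refine (integrable_mul_gaussPDF.abs).mono' hm.aestronglyMeasurable ?_
  refine Filter.Eventually.of_forall fun z => ?_
  have h1 : |z * Real.sign (m + z) * gaussPDF z| = |z| * |Real.sign (m + z)| * gaussPDF z := by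
    rw [abs_mul, abs_mul, abs_of_nonneg (gaussPDF_pos z).le]
  rw [Real.norm_eq_abs, h1, abs_mul, abs_of_nonneg (gaussPDF_pos z).le]
  exact mul_le_mul_of_nonneg_right
    (by nlinarith [abs_realSign_le (m + z), abs_nonneg z] :
      |z| * |Real.sign (m + z)| ≤ |z|) (gaussPDF_pos z).le

lemma integral_sign_mul_gaussPDF (m : ℝ) :
    ∫ z, z * Real.sign (m + z) * gaussPDF z = 2 * gaussPDF m := by
  set f := fun z : ℝ => z * Real.sign (m + z) * gaussPDF z with hf
  have hint := integrable_sign_mul_gaussPDF m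
  have hsplit : (∫ z in Iic (-m), f z) + ∫ z in Ioi (-m), f z = ∫ z, f z :=
    intervalIntegral.integral_Iic_add_Ioi hint.integrableOn hint.integrableOn
  have hIic : ∫ z in Iic (-m), f z = gaussPDF (-m) := by
    have h1 : ∫ z in Iic (-m), f z = ∫ z in Iio (-m), f z :=
      (setIntegral_congr_set Iio_ae_eq_Iic).symm
    have h2 : ∫ z in Iio (-m), f z = ∫ z in Iio (-m), -(z * gaussPDF z) := by
      refine setIntegral_congr_fun measurableSet_Iio fun z hz => ?_
      have : m + z < 0 := by simp only [mem_Iio] at hz; linarith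
      simp only [hf, Real.sign_of_neg this]; ring
    have h3 : ∫ z in Iio (-m), -(z * gaussPDF z) = - ∫ z in Iio (-m), z * gaussPDF z :=
      integral_neg _
    have h4 : ∫ z in Iio (-m), z * gaussPDF z = ∫ z in Iic (-m), z * gaussPDF z :=
      setIntegral_congr_set Iio_ae_eq_Iic
    rw [h1, h2, h3, h4, integral_Iic_mul_gaussPDF, neg_neg]
  have hIoi : ∫ z in Ioi (-m), f z = gaussPDF (-m) := by
    have h2 : ∫ z in Ioi (-m), f z = ∫ z in Ioi (-m), z * gaussPDF z := by
      refine setIntegral_congr_fun measurableSet_Ioi fun z hz => ?_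
      have : 0 < m + z := by simp only [mem_Ioi] at hz; linarith
      simp only [hf, Real.sign_of_pos this]; ring
    rw [h2, integral_Ioi_mul_gaussPDF]
  rw [← hsplit, hIic, hIoi, gaussPDF_neg]; ring

lemma integral_sq_mul_gaussPDF : ∫ z, z^2 * gaussPDF z = 1 := by
  have hd : ∀ x : ℝ, HasDerivAt (fun z => -(z * gaussPDF z)) (x^2 * gaussPDF x - gaussPDF x) x := by
    intro x
    have h1 : HasDerivAt (fun z : ℝ => z * gaussPDF z)
        (1 * gaussPDF x + x * (-x * gaussPDF x)) x :=
      (hasDerivAt_id x).mul (hasDerivAt_gaussPDF x)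
    have := h1.neg
    convert this using 1
    · rfl
    · rfl
    · rfl
    · ring
  have hint : Integrable (fun z => z^2 * gaussPDF z - gaussPDF z) :=
    integrable_sq_mul_gaussPDF.sub integrable_gaussPDF
  have hIoi : ∫ z in Ioi (0:ℝ), (z^2 * gaussPDF z - gaussPDF z) = 0 := by
    have := integral_Ioi_of_hasDerivAt_of_tendsto' (a := (0:ℝ)) (m := 0)
      (f := fun z => -(z * gaussPDF z)) (f' := fun z => z^2 * gaussPDF z - gaussPDF z)
      (fun x _ => hd x) hint.integrableOn
      (by simpa using tendsto_mul_gaussPDF_atTop.neg)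
    simpa using this
  have hIic : ∫ z in Iic (0:ℝ), (z^2 * gaussPDF z - gaussPDF z) = 0 := by
    have := integral_Iic_of_hasDerivAt_of_tendsto' (a := (0:ℝ)) (m := 0)
      (f := fun z => -(z * gaussPDF z)) (f' := fun z => z^2 * gaussPDF z - gaussPDF z)
      (fun x _ => hd x) hint.integrableOn
      (by simpa using tendsto_mul_gaussPDF_atBot.neg)
    simpa using this
  have hsplit := intervalIntegral.integral_Iic_add_Ioi (b := (0:ℝ)) hint.integrableOn hint.integrableOn
  rw [hIic, hIoi] at hsplit
  have h0 : ∫ z, (z^2 * gaussPDF z - gaussPDF z) = 0 := by linarith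
  rw [integral_sub integrable_sq_mul_gaussPDF integrable_gaussPDF, integral_gaussPDF] at h0
  linarith

lemma softThr_eq {x τ : ℝ} (h : τ ≤ |x|) : softThr x τ = x - τ * Real.sign x := by
  unfold softThr
  rw [max_eq_left (by linarith)]
  rcases lt_trichotomy x 0 with hx | hx | hx
  · rw [Real.sign_of_neg hx, abs_of_neg hx]; ring
  · subst hx; simp [Real.sign_zero]
  · rw [Real.sign_of_pos hx, abs_of_pos hx]; ring

lemma softThr_zero_of_le {x τ : ℝ} (h : |x| ≤ τ) : softThr x τ = 0 := by
  unfold softThr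
  rw [max_eq_right (by linarith)]
  ring

lemma softThr_sq_eq {m τ z : ℝ} (hτ : τ ≤ |m + z|) (hx : m + z ≠ 0) :
    (softThr (m + z) τ - m) ^ 2 = z ^ 2 - 2 * τ * Real.sign (m + z) * z + τ ^ 2 := by
  rw [softThr_eq hτ]
  have hs : (Real.sign (m + z)) ^ 2 = 1 := by
    rcases Real.sign_apply_eq_of_ne_zero _ hx with h | h <;> rw [h] <;> norm_num
  have : (m + z - τ * Real.sign (m + z) - m) ^ 2
      = z ^ 2 - 2 * τ * Real.sign (m + z) * z + τ ^ 2 * (Real.sign (m + z)) ^ 2 := by ring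
  rw [this, hs, mul_one]

lemma measurable_inner (m τ : ℝ) :
    Measurable (fun z => (softThr (m + z) τ - m) ^ 2 * gaussPDF z) := by
  have hsoft : Measurable fun x : ℝ => softThr x τ :=
    measurable_realSign.mul ((measurable_abs.sub measurable_const).max measurable_const)
  exact (((hsoft.comp (measurable_const.add measurable_id)).sub measurable_const).pow_const 2).mul
    continuous_gaussPDF.measurable

lemma softThr_abs_le (x τ : ℝ) : |softThr x τ| ≤ |x| + |τ| := by
  unfold softThr
  rw [abs_mul]
  have h1 : |max (|x| - τ) 0| ≤ |x| + |τ| := by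
    rw [abs_of_nonneg (le_max_right _ _)]
    rcases max_cases (|x| - τ) 0 with ⟨h, _⟩ | ⟨h, _⟩ <;> rw [h]
    · have := abs_le.1 (le_refl |τ|); cases abs_cases τ with
      | inl h2 => linarith [h2.1]
      | inr h2 => linarith [h2.1]
    · positivity
  calc |Real.sign x| * |max (|x| - τ) 0| ≤ 1 * (|x| + |τ|) := by
        apply mul_le_mul (abs_realSign_le x) h1 (abs_nonneg _) zero_le_one
    _ = |x| + |τ| := one_mul _

lemma integrable_quad_gaussPDF (c : ℝ) : Integrable (fun z => (c + |z|) ^ 2 * gaussPDF z) := by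
  have h : ∀ z : ℝ, (c + |z|) ^ 2 * gaussPDF z
      = c ^ 2 * gaussPDF z + 2 * c * (|z| * gaussPDF z) + z ^ 2 * gaussPDF z := by
    intro z
    rw [← sq_abs z]; ring
  simp_rw [h]
  have habs : Integrable (fun z => |z| * gaussPDF z) := by
    have := integrable_mul_gaussPDF.abs
    refine this.congr (Filter.Eventually.of_forall fun z => ?_)
    show |z * gaussPDF z| = |z| * gaussPDF z
    rw [abs_mul, abs_of_nonneg (gaussPDF_pos z).le]
  exact ((integrable_gaussPDF.const_mul _).add (habs.const_mul _)).add integrable_sq_mul_gaussPDF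

lemma integrable_inner (m τ : ℝ) :
    Integrable (fun z => (softThr (m + z) τ - m) ^ 2 * gaussPDF z) := by
  refine (integrable_quad_gaussPDF (2 * |m| + |τ|)).mono'
    (measurable_inner m τ).aestronglyMeasurable ?_
  refine Filter.Eventually.of_forall fun z => ?_
  rw [Real.norm_eq_abs, abs_mul, abs_of_nonneg (gaussPDF_pos z).le, abs_of_nonneg (sq_nonneg _)]
  have hb : |softThr (m + z) τ - m| ≤ 2 * |m| + |τ| + |z| := by
    calc |softThr (m + z) τ - m| ≤ |softThr (m + z) τ| + |m| := abs_sub _ _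
      _ ≤ (|m + z| + |τ|) + |m| := by linarith [softThr_abs_le (m + z) τ]
      _ ≤ (|m| + |z| + |τ|) + |m| := by linarith [abs_add_le m z]
      _ = 2 * |m| + |τ| + |z| := by ring
  have h2 : (softThr (m + z) τ - m) ^ 2 ≤ (2 * |m| + |τ| + |z|) ^ 2 := by
    rw [← sq_abs (softThr (m + z) τ - m)]
    exact pow_le_pow_left₀ (abs_nonneg _) hb 2
  exact mul_le_mul_of_nonneg_right h2 (gaussPDF_pos z).le

lemma integrable_P (m τ : ℝ) :
    Integrable (fun z => (z ^ 2 - 2 * τ * Real.sign (m + z) * z + τ ^ 2) * gaussPDF z) := by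
  have h := (integrable_sq_mul_gaussPDF.sub
    ((integrable_sign_mul_gaussPDF m).const_mul (2 * τ))).add
    (integrable_gaussPDF.const_mul (τ ^ 2))
  refine h.congr (Filter.Eventually.of_forall fun z => ?_)
  simp only [Pi.add_apply, Pi.sub_apply]; ring

lemma integral_P (m τ : ℝ) :
    ∫ z, (z ^ 2 - 2 * τ * Real.sign (m + z) * z + τ ^ 2) * gaussPDF z
      = 1 - 4 * τ * gaussPDF m + τ ^ 2 := by
  have h : ∀ z : ℝ, (z ^ 2 - 2 * τ * Real.sign (m + z) * z + τ ^ 2) * gaussPDF z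
      = (z ^ 2 * gaussPDF z - 2 * τ * (z * Real.sign (m + z) * gaussPDF z))
        + τ ^ 2 * gaussPDF z := by intro z; ring
  simp_rw [h]
  have hA : Integrable (fun z => z ^ 2 * gaussPDF z
      - 2 * τ * (z * Real.sign (m + z) * gaussPDF z)) :=
    integrable_sq_mul_gaussPDF.sub ((integrable_sign_mul_gaussPDF m).const_mul (2 * τ))
  have hB : Integrable (fun z : ℝ => τ ^ 2 * gaussPDF z) := integrable_gaussPDF.const_mul _
  have hC : Integrable (fun z : ℝ => 2 * τ * (z * Real.sign (m + z) * gaussPDF z)) :=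
    (integrable_sign_mul_gaussPDF m).const_mul (2 * τ)
  rw [integral_add hA hB, integral_sub integrable_sq_mul_gaussPDF hC,
    integral_const_mul, integral_const_mul, integral_sq_mul_gaussPDF,
    integral_sign_mul_gaussPDF, integral_gaussPDF]
  ring

lemma ae_ne_neg (m : ℝ) : ∀ᵐ z : ℝ, z ≠ -m := by
  rw [ae_iff]
  have : {z : ℝ | ¬ z ≠ -m} = {-m} := by ext z; simp
  rw [this]
  exact measure_singleton _

lemma innerF_of_nonpos (m : ℝ) {τ : ℝ} (hτ : τ ≤ 0) :
    ∫ z, (softThr (m + z) τ - m) ^ 2 * gaussPDF z = 1 - 4 * τ * gaussPDF m + τ ^ 2 := by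
  rw [← integral_P m τ]
  refine integral_congr_ae ?_
  filter_upwards [ae_ne_neg m] with z hz
  have hx : m + z ≠ 0 := fun h => hz (by linarith)
  rw [softThr_sq_eq (le_trans hτ (abs_nonneg _)) hx]

lemma innerF_err (m : ℝ) {τ : ℝ} (h0 : 0 ≤ τ) (h1 : τ ≤ 1) :
    |(∫ z, (softThr (m + z) τ - m) ^ 2 * gaussPDF z) - (1 - 4 * τ * gaussPDF m + τ ^ 2)|
      ≤ 8 * (|m| + 1) * τ ^ 2 := by
  rw [← integral_P m τ,
    ← integral_sub (integrable_inner m τ) (integrable_P m τ)]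
  have key : ∀ z : ℝ, ‖(softThr (m + z) τ - m) ^ 2 * gaussPDF z
        - (z ^ 2 - 2 * τ * Real.sign (m + z) * z + τ ^ 2) * gaussPDF z‖
      ≤ Set.indicator (Icc (-m - τ) (-m + τ)) (fun _ => 4 * τ * (|m| + 1)) z := by
    intro z
    by_cases hz : z ∈ Icc (-m - τ) (-m + τ)
    · rw [Set.indicator_of_mem hz]
      have habs : |m + z| ≤ τ := by
        rw [abs_le]; constructor <;> [linarith [hz.1]; linarith [hz.2]]
      rw [softThr_zero_of_le habs]
      have hzb : |z| ≤ |m| + τ := by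
        have : |z| = |(m + z) + (-m)| := by ring_nf
        rw [this]
        calc |(m + z) + (-m)| ≤ |m + z| + |-m| := abs_add_le _ _
          _ ≤ τ + |m| := by rw [abs_neg]; linarith
          _ = |m| + τ := by ring
      have hbound : |(0 - m) ^ 2 - (z ^ 2 - 2 * τ * Real.sign (m + z) * z + τ ^ 2)|
          ≤ 4 * τ * (|m| + 1) := by
        have e1 : (0 - m) ^ 2 - (z ^ 2 - 2 * τ * Real.sign (m + z) * z + τ ^ 2)
            = (m - z) * (m + z) + 2 * τ * Real.sign (m + z) * z - τ ^ 2 := by ring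
        rw [e1]
        have b1 : |(m - z) * (m + z)| ≤ (2 * |m| + τ) * τ := by
          rw [abs_mul]
          apply mul_le_mul _ habs (abs_nonneg _) (by positivity)
          calc |m - z| ≤ |m| + |z| := abs_sub _ _
            _ ≤ |m| + (|m| + τ) := by linarith
            _ = 2 * |m| + τ := by ring
        have b2 : |2 * τ * Real.sign (m + z) * z| ≤ 2 * τ * (|m| + τ) := by
          rw [abs_mul, abs_mul, abs_mul]
          rw [abs_of_nonneg (by norm_num : (0:ℝ) ≤ 2), abs_of_nonneg h0]
          calc 2 * τ * |Real.sign (m + z)| * |z| ≤ 2 * τ * 1 * (|m| + τ) := by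
                apply mul_le_mul _ hzb (abs_nonneg _) (by positivity)
                exact mul_le_mul_of_nonneg_left (abs_realSign_le _) (by positivity)
            _ = 2 * τ * (|m| + τ) := by ring
        have b3 : |(τ:ℝ) ^ 2| = τ ^ 2 := abs_of_nonneg (sq_nonneg _)
        calc |(m - z) * (m + z) + 2 * τ * Real.sign (m + z) * z - τ ^ 2|
            ≤ |(m - z) * (m + z) + 2 * τ * Real.sign (m + z) * z| + |τ ^ 2| := abs_sub _ _
          _ ≤ |(m - z) * (m + z)| + |2 * τ * Real.sign (m + z) * z| + |τ ^ 2| := by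
              linarith [abs_add_le ((m - z) * (m + z)) (2 * τ * Real.sign (m + z) * z)]
          _ ≤ (2 * |m| + τ) * τ + 2 * τ * (|m| + τ) + τ ^ 2 := by rw [b3]; linarith
          _ = τ * (4 * |m| + 4 * τ) := by ring
          _ ≤ τ * (4 * |m| + 4) := by nlinarith
          _ = 4 * τ * (|m| + 1) := by ring
      calc ‖(0 - m) ^ 2 * gaussPDF z
            - (z ^ 2 - 2 * τ * Real.sign (m + z) * z + τ ^ 2) * gaussPDF z‖
          = |(0 - m) ^ 2 - (z ^ 2 - 2 * τ * Real.sign (m + z) * z + τ ^ 2)| * gaussPDF z := by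
            rw [Real.norm_eq_abs, ← sub_mul, abs_mul, abs_of_nonneg (gaussPDF_pos z).le]
        _ ≤ (4 * τ * (|m| + 1)) * 1 := by
            apply mul_le_mul hbound (gaussPDF_le_one z) (gaussPDF_pos z).le (by positivity)
        _ = 4 * τ * (|m| + 1) := by ring
    · rw [Set.indicator_of_notMem hz]
      have habs : τ < |m + z| := by
        simp only [mem_Icc, not_and_or, not_le] at hz
        rcases hz with h | h
        · have : τ < -(m + z) := by linarith
          linarith [neg_le_abs (m + z)]
        · have : τ < m + z := by linarith
          linarith [le_abs_self (m + z)]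
      have hx : m + z ≠ 0 := by
        intro h; rw [h, abs_zero] at habs; linarith
      rw [softThr_sq_eq habs.le hx, sub_self, norm_zero]
  have hg : Integrable (Set.indicator (Icc (-m - τ) (-m + τ))
      (fun _ : ℝ => 4 * τ * (|m| + 1))) := by
    rw [integrable_indicator_iff measurableSet_Icc]
    exact integrableOn_const measure_Icc_lt_top.ne
  have hle := norm_integral_le_of_norm_le hg (Filter.Eventually.of_forall key)
  rw [Real.norm_eq_abs] at hle
  refine hle.trans ?_
  rw [integral_indicator_const _ measurableSet_Icc]
  rw [Real.volume_real_Icc]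
  have : (-m + τ) - (-m - τ) = 2 * τ := by ring
  rw [this, max_eq_left (by positivity)]
  rw [smul_eq_mul]
  nlinarith [abs_nonneg m]

section Outer

variable {G : Measure ℝ} [IsProbabilityMeasure G]

lemma integrable_gaussPDF_G : Integrable gaussPDF G := by
  refine (integrable_const (1:ℝ)).mono' continuous_gaussPDF.aestronglyMeasurable
    (Filter.Eventually.of_forall fun m => ?_)
  rw [Real.norm_eq_abs, abs_of_nonneg (gaussPDF_pos m).le]
  exact gaussPDF_le_one m

lemma integrable_abs_G (hG : Integrable (fun m => m ^ 2) G) :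
    Integrable (fun m : ℝ => |m|) G := by
  refine ((integrable_const (1:ℝ)).add hG).mono' measurable_abs.aestronglyMeasurable
    (Filter.Eventually.of_forall fun m => ?_)
  rw [Real.norm_eq_abs, abs_abs]
  simp only [Pi.add_apply]
  nlinarith [sq_nonneg (|m| - 1), sq_abs m]

lemma aesm_innerF (τ : ℝ) :
    AEStronglyMeasurable (fun m => ∫ z, (softThr (m + z) τ - m) ^ 2 * gaussPDF z) G := by
  apply StronglyMeasurable.aestronglyMeasurable
  apply MeasureTheory.StronglyMeasurable.integral_prod_right'
    (f := fun p : ℝ × ℝ => (softThr (p.1 + p.2) τ - p.1) ^ 2 * gaussPDF p.2)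
  apply Measurable.stronglyMeasurable
  have hsoft : Measurable fun x : ℝ => softThr x τ :=
    measurable_realSign.mul ((measurable_abs.sub measurable_const).max measurable_const)
  exact (((hsoft.comp (measurable_fst.add measurable_snd)).sub measurable_fst).pow_const 2).mul
    (continuous_gaussPDF.measurable.comp measurable_snd)

lemma integrable_base_G (τ : ℝ) :
    Integrable (fun m => 1 - 4 * τ * gaussPDF m + τ ^ 2) G := by
  have h : Integrable (fun m : ℝ => (1 + τ ^ 2) - 4 * τ * gaussPDF m) G :=
    (integrable_const _).sub (integrable_gaussPDF_G.const_mul _)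
  exact h.congr (Filter.Eventually.of_forall fun m => by ring)

lemma integral_base_G (τ : ℝ) :
    ∫ m, (1 - 4 * τ * gaussPDF m + τ ^ 2) ∂G
      = 1 - 4 * τ * (∫ m, gaussPDF m ∂G) + τ ^ 2 := by
  have h : ∀ m : ℝ, 1 - 4 * τ * gaussPDF m + τ ^ 2 = (1 + τ ^ 2) - 4 * τ * gaussPDF m :=
    fun m => by ring
  simp_rw [h]
  rw [integral_sub (integrable_const _) (integrable_gaussPDF_G.const_mul _),
    integral_const, integral_const_mul]
  simp [measure_univ]
  ring

lemma integrable_innerF_G (hG : Integrable (fun m => m ^ 2) G) {τ : ℝ} (h0 : 0 ≤ τ) (h1 : τ ≤ 1) :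
    Integrable (fun m => ∫ z, (softThr (m + z) τ - m) ^ 2 * gaussPDF z) G := by
  have hbd : Integrable (fun m : ℝ => 14 + 8 * |m|) G :=
    (integrable_const _).add ((integrable_abs_G hG).const_mul 8)
  refine hbd.mono' (aesm_innerF τ) (Filter.Eventually.of_forall fun m => ?_)
  rw [Real.norm_eq_abs]
  have herr := innerF_err m h0 h1
  have hbase : |1 - 4 * τ * gaussPDF m + τ ^ 2| ≤ 6 := by
    have h2 : 0 < gaussPDF m := gaussPDF_pos m
    have h3 : gaussPDF m ≤ 1 := gaussPDF_le_one m
    rw [abs_le]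
    constructor <;> nlinarith
  have hτ2 : τ ^ 2 ≤ 1 := by nlinarith
  have h8 : 8 * (|m| + 1) * τ ^ 2 ≤ 8 * (|m| + 1) := by nlinarith [abs_nonneg m]
  calc |∫ z, (softThr (m + z) τ - m) ^ 2 * gaussPDF z|
      ≤ |(∫ z, (softThr (m + z) τ - m) ^ 2 * gaussPDF z) - (1 - 4 * τ * gaussPDF m + τ ^ 2)|
        + |1 - 4 * τ * gaussPDF m + τ ^ 2| := by
        have := abs_add_le ((∫ z, (softThr (m + z) τ - m) ^ 2 * gaussPDF z)
          - (1 - 4 * τ * gaussPDF m + τ ^ 2)) (1 - 4 * τ * gaussPDF m + τ ^ 2)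
        simpa using this
    _ ≤ 8 * (|m| + 1) * τ ^ 2 + 6 := by linarith
    _ ≤ 14 + 8 * |m| := by linarith

lemma stRisk_of_nonpos {τ : ℝ} (hτ : τ ≤ 0) :
    stRisk G τ = 1 - 4 * τ * (∫ m, gaussPDF m ∂G) + τ ^ 2 := by
  unfold stRisk
  rw [← integral_base_G τ]
  exact integral_congr_ae (Filter.Eventually.of_forall fun m => innerF_of_nonpos m hτ)

lemma stRisk_zero : stRisk G 0 = 1 := by
  rw [stRisk_of_nonpos le_rfl]; ring

lemma stRisk_err (hG : Integrable (fun m => m ^ 2) G) {τ : ℝ} (h0 : 0 ≤ τ) (h1 : τ ≤ 1) :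
    |stRisk G τ - (1 - 4 * τ * (∫ m, gaussPDF m ∂G) + τ ^ 2)|
      ≤ 8 * ((∫ m, |m| ∂G) + 1) * τ ^ 2 := by
  have hsub : stRisk G τ - (1 - 4 * τ * (∫ m, gaussPDF m ∂G) + τ ^ 2)
      = ∫ m, ((∫ z, (softThr (m + z) τ - m) ^ 2 * gaussPDF z)
          - (1 - 4 * τ * gaussPDF m + τ ^ 2)) ∂G := by
    rw [integral_sub (integrable_innerF_G hG h0 h1) (integrable_base_G τ), ← integral_base_G τ]
    rfl
  rw [hsub]
  have hg : Integrable (fun m : ℝ => 8 * (|m| + 1) * τ ^ 2) G := by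
    have : Integrable (fun m : ℝ => (|m| + 1)) G := (integrable_abs_G hG).add (integrable_const 1)
    exact (this.const_mul 8).mul_const (τ ^ 2) |>.congr
      (Filter.Eventually.of_forall fun m => by ring)
  have hle := norm_integral_le_of_norm_le hg (Filter.Eventually.of_forall fun m => by
    rw [Real.norm_eq_abs]; exact innerF_err m h0 h1)
  rw [Real.norm_eq_abs] at hle
  refine hle.trans ?_
  have : ∫ m, 8 * (|m| + 1) * τ ^ 2 ∂G = 8 * ((∫ m, |m| ∂G) + 1) * τ ^ 2 := by
    rw [show (fun m : ℝ => 8 * (|m| + 1) * τ ^ 2) = fun m : ℝ => (8 * τ ^ 2) * (|m| + 1) from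
      funext fun m => by ring]
    rw [integral_const_mul, integral_add (integrable_abs_G hG) (integrable_const 1),
      integral_const]
    simp [measure_univ]
    ring
  rw [this]

end Outer

/-- the derivative of the soft-thresholding risk at `τ = 0` equals
`−4·E_μ[φ(μ)] = −4·E_μ[e^{−μ²/2}/√(2π)]`, and this derivative is strictly negative. -/
theorem stRisk_deriv_at_zero (G : Measure ℝ) [IsProbabilityMeasure G]
    (hG : Integrable (fun m => m ^ 2) G) :
    HasDerivAt (stRisk G) (-4 * ∫ m, gaussPDF m ∂G) 0 ∧
      (-4 * ∫ m, gaussPDF m ∂G) = -4 * ∫ m, Real.exp (-m ^ 2 / 2) / Real.sqrt (2 * Real.pi) ∂G ∧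
      (-4 * ∫ m, gaussPDF m ∂G) < 0 := by
  set I := ∫ m, gaussPDF m ∂G with hI
  set M := ∫ m, |m| ∂G with hM
  have hM0 : 0 ≤ M := integral_nonneg fun m => abs_nonneg m
  set K : ℝ := 1 + 8 * (M + 1) with hK
  have hK1 : 1 ≤ K := by simp only [hK]; linarith
  have hK0 : 0 < K := by linarith
  have key : ∀ τ : ℝ, |τ| ≤ 1 → |stRisk G τ - stRisk G 0 - τ * (-4 * I)| ≤ K * τ ^ 2 := by
    intro τ hτ
    rw [stRisk_zero]
    rcases le_or_gt τ 0 with h | h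
    · rw [stRisk_of_nonpos h]
      have : 1 - 4 * τ * I + τ ^ 2 - 1 - τ * (-4 * I) = τ ^ 2 := by ring
      rw [this, abs_of_nonneg (sq_nonneg τ)]
      nlinarith [sq_nonneg τ]
    · have h1 : τ ≤ 1 := by rw [abs_of_pos h] at hτ; exact hτ
      have herr := stRisk_err hG h.le h1
      have : stRisk G τ - 1 - τ * (-4 * I)
          = (stRisk G τ - (1 - 4 * τ * I + τ ^ 2)) + τ ^ 2 := by ring
      rw [this]
      calc |(stRisk G τ - (1 - 4 * τ * I + τ ^ 2)) + τ ^ 2|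
          ≤ |stRisk G τ - (1 - 4 * τ * I + τ ^ 2)| + |τ ^ 2| := abs_add_le _ _
        _ ≤ 8 * (M + 1) * τ ^ 2 + τ ^ 2 := by
            rw [abs_of_nonneg (sq_nonneg τ)]; linarith
        _ = K * τ ^ 2 := by rw [hK]; ring
  have hderiv : HasDerivAt (stRisk G) (-4 * I) 0 := by
    rw [hasDerivAt_iff_isLittleO, Asymptotics.isLittleO_iff]
    intro c hc
    have hδ : 0 < min 1 (c / K) := lt_min one_pos (div_pos hc hK0)
    filter_upwards [eventually_abs_sub_lt 0 hδ] with τ hτ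
    rw [sub_zero] at hτ
    have hτ1 : |τ| ≤ 1 := le_of_lt (lt_of_lt_of_le hτ (min_le_left _ _))
    have hτ2 : |τ| ≤ c / K := le_of_lt (lt_of_lt_of_le hτ (min_le_right _ _))
    have h := key τ hτ1
    rw [sub_zero, smul_eq_mul, Real.norm_eq_abs, Real.norm_eq_abs]
    have e : stRisk G τ - stRisk G 0 - τ * (-4 * I) = stRisk G τ - stRisk G 0 - τ * (-4 * I) := rfl
    calc |stRisk G τ - stRisk G 0 - τ * (-4 * I)| ≤ K * τ ^ 2 := h
      _ = (K * |τ|) * |τ| := by rw [show (K * |τ|) * |τ| = K * (|τ| * |τ|) by ring,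
            abs_mul_abs_self, sq]
      _ ≤ c * |τ| := by
          apply mul_le_mul_of_nonneg_right _ (abs_nonneg τ)
          calc K * |τ| ≤ K * (c / K) := mul_le_mul_of_nonneg_left hτ2 hK0.le
            _ = c := by field_simp
  refine ⟨hderiv, rfl, ?_⟩
  have hpos : 0 < I := by
    rw [hI]
    rw [integral_pos_iff_support_of_nonneg_ae
      (Filter.Eventually.of_forall fun m => (gaussPDF_pos m).le) integrable_gaussPDF_G]
    have : Function.support gaussPDF = Set.univ := by
      ext m; simp [Function.support, (gaussPDF_pos m).ne']
    rw [this]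
    simp [measure_univ]
  linarith
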